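/- Let f : ℝ → ℝ be n-times differentiable and let a, b be real numbers. Then for every real x, dⁿ/dxⁿ [f(a x² + b x)] = n! · Σ_{k=0}^{⌊n/2⌋} (2ax + b)^{n−2k} a^k / ((n−2k)! k!) · f^{(n−k)}(a x² + b x). -/

import Mathlib

open Finset


lemma key_abstract (n : ℕ) (T A B : ℕ → ℝ) (c c' : ℝ)
    (hstep : ∀ k, 2*k+2 ≤ n → c' * T (k+1) = c * (A k + B (k+1)))
    (h0 : c' * T 0 = c * B 0)
    (hAtop : n % 2 = 0 → A (n/2) = 0)
    (htop : n % 2 = 1 → c' * T ((n+1)/2) = c * A (n/2)) :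
    c' * ∑ k ∈ range ((n+1)/2+1), T k = c * ∑ k ∈ range (n/2+1), (A k + B k) := by
  rw [Finset.sum_add_distrib]
  rcases Nat.even_or_odd n with ⟨m, rfl⟩ | ⟨m, rfl⟩
  · have hA0 : A ((m+m)/2) = 0 := hAtop (by omega)
    rw [show (m+m)/2 = m from by omega] at hA0 ⊢
    rw [show (m+m+1)/2 = m from by omega]
    rw [Finset.sum_range_succ' T m, Finset.sum_range_succ A m, Finset.sum_range_succ' B m,
      hA0, add_zero]
    have hs : ∀ k ∈ range m, c' * T (k+1) = c * A k + c * B (k+1) := fun k hk => by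
      rw [hstep k (by have := mem_range.mp hk; omega)]; ring
    simp only [mul_add, Finset.mul_sum]
    rw [Finset.sum_congr rfl hs, Finset.sum_add_distrib, h0]
    ring
  · have ht : c' * T ((2*m+1+1)/2) = c * A ((2*m+1)/2) := htop (by omega)
    rw [show (2*m+1+1)/2 = m+1 from by omega, show (2*m+1)/2 = m from by omega] at ht ⊢
    rw [Finset.sum_range_succ' T (m+1), Finset.sum_range_succ (fun k => T (k+1)) m,
      Finset.sum_range_succ A m, Finset.sum_range_succ' B m]
    have hs : ∀ k ∈ range m, c' * T (k+1) = c * A k + c * B (k+1) := fun k hk => by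
      rw [hstep k (by have := mem_range.mp hk; omega)]; ring
    simp only [mul_add, Finset.mul_sum]
    rw [Finset.sum_congr rfl hs, Finset.sum_add_distrib, h0, ht]
    ring

lemma fact_ne (j : ℕ) : (j.factorial : ℝ) ≠ 0 :=
  Nat.cast_ne_zero.mpr (Nat.factorial_ne_zero j)

lemma key (n : ℕ) (V a : ℝ) (F : ℕ → ℝ) :
    ((n+1).factorial : ℝ) * ∑ k ∈ range ((n+1)/2+1),
        V ^ (n+1-2*k) * a ^ k / (((n+1-2*k).factorial : ℝ) * (k.factorial : ℝ)) * F (n+1-k)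
    = (n.factorial : ℝ) * ∑ k ∈ range (n/2+1),
        ((↑(n-2*k) * V^(n-2*k-1) * (2*a)) * F (n-k)
          + V^(n-2*k) * (F (n-k+1) * V)) * (a^k / (((n-2*k).factorial : ℝ) * (k.factorial : ℝ))) := by
  have h := key_abstract n
    (fun k => V ^ (n+1-2*k) * a ^ k / (((n+1-2*k).factorial : ℝ) * (k.factorial : ℝ)) * F (n+1-k))
    (fun k => (↑(n-2*k) * V^(n-2*k-1) * (2*a)) * F (n-k) * (a^k / (((n-2*k).factorial : ℝ) * (k.factorial : ℝ))))
    (fun k => V^(n-2*k) * (F (n-k+1) * V) * (a^k / (((n-2*k).factorial : ℝ) * (k.factorial : ℝ))))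
    (n.factorial : ℝ) ((n+1).factorial : ℝ) ?_ ?_ ?_ ?_
  · rw [h]
    congr 1
    refine Finset.sum_congr rfl fun k _ => ?_
    ring
  · -- hstep
    intro k hk
    obtain ⟨j, rfl⟩ : ∃ j, n = 2*k+2+j := ⟨n-(2*k+2), by omega⟩
    simp only [show 2*k+2+j+1-2*(k+1) = j+1 from by omega,
      show 2*k+2+j+1-(k+1) = k+j+2 from by omega,
      show 2*k+2+j-2*k = j+1+1 from by omega,
      show 2*k+2+j-2*k-1 = j+1 from by omega,
      show 2*k+2+j-k = k+j+2 from by omega,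
      show 2*k+2+j-2*(k+1) = j from by omega,
      show 2*k+2+j-(k+1)+1 = k+j+2 from by omega]
    rw [show 2*k+2+j+1 = (2*k+2+j)+1 from rfl]
    rw [Nat.factorial_succ (2*k+2+j), Nat.factorial_succ (j+1), Nat.factorial_succ j,
      Nat.factorial_succ k]
    push_cast
    field_simp
    ring
  · -- h0
    simp only [Nat.sub_zero, mul_zero, Nat.factorial_zero, pow_zero]
    rw [Nat.factorial_succ n]
    push_cast
    field_simp
    ring
  · -- hAtop
    intro hpar
    have : n - 2*(n/2) = 0 := by omega
    simp [this]
  · -- htop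
    intro hpar
    obtain ⟨m, rfl⟩ : ∃ m, n = 2*m+1 := ⟨n/2, by omega⟩
    simp only [show (2*m+1+1)/2 = m+1 from by omega, show (2*m+1)/2 = m from by omega,
      show 2*m+1+1-2*(m+1) = 0 from by omega,
      show 2*m+1+1-(m+1) = m+1 from by omega,
      show 2*m+1-2*m = 1 from by omega,
      show 2*m+1-2*m-1 = 0 from by omega,
      show 2*m+1-m = m+1 from by omega]
    rw [show 2*m+1+1 = (2*m+1)+1 from rfl, Nat.factorial_succ (2*m+1), Nat.factorial_succ m]
    push_cast
    field_simp
    ring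

lemma aux (f : ℝ → ℝ) (a b : ℝ) : ∀ n : ℕ, ContDiff ℝ n f → ∀ x : ℝ,
    iteratedDeriv n (fun t => f (a * t ^ 2 + b * t)) x =
      (n.factorial : ℝ) * ∑ k ∈ Finset.range (n / 2 + 1),
        (2 * a * x + b) ^ (n - 2 * k) * a ^ k /
            (((n - 2 * k).factorial : ℝ) * k.factorial) *
          iteratedDeriv (n - k) f (a * x ^ 2 + b * x) := by
  intro n
  induction n with
  | zero => intro hf x; simp
  | succ n ih =>
    intro hf x
    have hIH : iteratedDeriv n (fun t => f (a * t ^ 2 + b * t)) =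
        fun y => (n.factorial : ℝ) * ∑ k ∈ Finset.range (n / 2 + 1),
          (2 * a * y + b) ^ (n - 2 * k) * a ^ k /
              (((n - 2 * k).factorial : ℝ) * k.factorial) *
            iteratedDeriv (n - k) f (a * y ^ 2 + b * y) :=
      funext (ih (hf.of_le (by exact_mod_cast Nat.le_succ n)))
    rw [iteratedDeriv_succ, hIH]
    have hu : ∀ y : ℝ, HasDerivAt (fun t : ℝ => a * t ^ 2 + b * t) (2 * a * y + b) y := by
      intro y
      have h1 := ((hasDerivAt_pow 2 y).const_mul a).fun_add ((hasDerivAt_id y).const_mul b)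
      refine h1.congr_deriv ?_
      ring
    have hlin : HasDerivAt (fun y : ℝ => 2 * a * y + b) (2 * a) x := by
      simpa using ((hasDerivAt_id x).const_mul (2*a)).add_const b
    have hD : ∀ k ∈ Finset.range (n / 2 + 1),
        HasDerivAt (fun y => (2 * a * y + b) ^ (n - 2 * k) * a ^ k /
              (((n - 2 * k).factorial : ℝ) * k.factorial) *
            iteratedDeriv (n - k) f (a * y ^ 2 + b * y))
          (((↑(n-2*k) * (2*a*x+b)^(n-2*k-1) * (2*a)) * iteratedDeriv (n-k) f (a*x^2+b*x)
            + (2*a*x+b)^(n-2*k) * (iteratedDeriv (n-k+1) f (a*x^2+b*x) * (2*a*x+b)))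
            * (a^k / (((n-2*k).factorial : ℝ) * (k.factorial : ℝ)))) x := by
      intro k hk
      have hvp : HasDerivAt (fun y : ℝ => (2*a*y+b)^(n-2*k))
          (↑(n-2*k) * (2*a*x+b)^(n-2*k-1) * (2*a)) x := hlin.pow _
      have hdiff : Differentiable ℝ (iteratedDeriv (n-k) f) :=
        hf.differentiable_iteratedDeriv (n-k) (by
          exact_mod_cast Nat.lt_succ_of_le (Nat.sub_le n k))
      have hF : HasDerivAt (iteratedDeriv (n-k) f)
          (iteratedDeriv (n-k+1) f (a*x^2+b*x)) (a*x^2+b*x) := by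
        have := (hdiff (a*x^2+b*x)).hasDerivAt
        rwa [← iteratedDeriv_succ] at this
      have hcomp : HasDerivAt (fun y => iteratedDeriv (n-k) f (a*y^2+b*y))
          (iteratedDeriv (n-k+1) f (a*x^2+b*x) * (2*a*x+b)) x := hF.comp (h := fun t : ℝ => a*t^2+b*t) x (hu x)
      have h := (hvp.fun_mul hcomp).mul_const (a^k / (((n-2*k).factorial : ℝ) * (k.factorial : ℝ)))
      have heq : (fun y => (2*a*y+b)^(n-2*k) * iteratedDeriv (n-k) f (a*y^2+b*y)
            * (a^k / (((n-2*k).factorial : ℝ) * (k.factorial : ℝ))))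
          = (fun y => (2 * a * y + b) ^ (n - 2 * k) * a ^ k /
              (((n - 2 * k).factorial : ℝ) * k.factorial) *
            iteratedDeriv (n - k) f (a * y ^ 2 + b * y)) := by
        funext y; ring
      rw [heq] at h
      exact h
    have hS := (HasDerivAt.fun_sum hD).const_mul (n.factorial : ℝ)
    rw [hS.deriv]
    exact (key n (2*a*x+b) a (fun j => iteratedDeriv j f (a*x^2+b*x))).symm

theorem iteratedDeriv_comp_quadratic (n : ℕ) (f : ℝ → ℝ) (hf : ContDiff ℝ n f)
    (a b x : ℝ) :
    iteratedDeriv n (fun t => f (a * t ^ 2 + b * t)) x =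
      (n.factorial : ℝ) * ∑ k ∈ Finset.range (n / 2 + 1),
        (2 * a * x + b) ^ (n - 2 * k) * a ^ k /
            (((n - 2 * k).factorial : ℝ) * k.factorial) *
          iteratedDeriv (n - k) f (a * x ^ 2 + b * x) := by
  exact aux f a b n hf x
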